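/- Suppose 0 < φⁿ < 1 pointwise, λ ≥ 0 with 4(λ+1) − θ > 0, and φⁿ⁺¹ satisfies (1/τ)(φⁿ⁺¹ − φⁿ) − ε²Δ_h φⁿ⁺¹ + ν(φⁿ)φⁿ⁺¹ = r(φⁿ) with ν, r as in the stabilized scheme. If r(s) − ν(s) < 0 for all s ∈ (0,1), then φⁿ⁺¹ < 1 pointwise. -/
import Mathlib


noncomputable def gradX {N M : ℕ} (h : ℝ) (φ : Fin N × Fin M → ℝ)
    (p : Fin (N + 1) × Fin M) : ℝ :=
  if hp : 0 < p.1.val ∧ p.1.val < N then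
    (φ (⟨p.1.val, hp.2⟩, p.2) - φ (⟨p.1.val - 1, by omega⟩, p.2)) / h
  else 0

noncomputable def gradY {N M : ℕ} (h : ℝ) (φ : Fin N × Fin M → ℝ)
    (p : Fin N × Fin (M + 1)) : ℝ :=
  if hp : 0 < p.2.val ∧ p.2.val < M then
    (φ (p.1, ⟨p.2.val, hp.2⟩) - φ (p.1, ⟨p.2.val - 1, by omega⟩)) / h
  else 0

/-- Cell-centered five-point discrete Laplacian with homogeneous Neumann
boundary conditions (boundary fluxes vanish). -/
noncomputable def discLap {N M : ℕ} (h : ℝ) (φ : Fin N × Fin M → ℝ)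
    (p : Fin N × Fin M) : ℝ :=
  (gradX h φ (p.1.succ, p.2) - gradX h φ (p.1.castSucc, p.2)) / h
    + (gradY h φ (p.1, p.2.succ) - gradY h φ (p.1, p.2.castSucc)) / h

/-- Discrete L² inner product. -/
noncomputable def discInner {N M : ℕ} (h : ℝ) (φ ψ : Fin N × Fin M → ℝ) : ℝ :=
  h ^ 2 * ∑ p : Fin N × Fin M, φ p * ψ p

/-- Discrete H¹ seminorm squared: ‖∇ₕφ‖². -/
noncomputable def discGradNormSq {N M : ℕ} (h : ℝ) (φ : Fin N × Fin M → ℝ) : ℝ :=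
  h ^ 2 * ((∑ p : Fin (N + 1) × Fin M, gradX h φ p ^ 2)
    + ∑ p : Fin N × Fin (M + 1), gradY h φ p ^ 2)

noncomputable def nuCoef (lam θ s : ℝ) : ℝ := (lam + 1) * (1 / s + 1 / (1 - s)) - θ

noncomputable def rCoef (lam θ s : ℝ) : ℝ :=
  -Real.log s + Real.log (1 - s) + (lam + 1) / (1 - s) - θ * (1 - s)

theorem discrete_maximum_principle_upper {N M : ℕ} (h τ ε lam θ : ℝ)
    (hh : 0 < h) (hτ : 0 < τ) (hε : 0 < ε) (hlam : 0 ≤ lam)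
    (hcoer : 0 < 4 * (lam + 1) - θ)
    (φ0 φ1 : Fin N × Fin M → ℝ)
    (h0 : ∀ p, φ0 p ∈ Set.Ioo (0:ℝ) 1)
    (hscheme : ∀ p, (φ1 p - φ0 p) / τ - ε ^ 2 * discLap h φ1 p
      + nuCoef lam θ (φ0 p) * φ1 p = rCoef lam θ (φ0 p))
    (hru : ∀ s : ℝ, s ∈ Set.Ioo (0:ℝ) 1 → rCoef lam θ s - nuCoef lam θ s < 0) :
    ∀ p, φ1 p < 1 := by
  by_contra hcon
  push_neg at hcon
  obtain ⟨q, hq⟩ := hcon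
  haveI : Nonempty (Fin N × Fin M) := ⟨q⟩
  obtain ⟨p, hp⟩ := Finite.exists_max φ1
  have hp1 : (1:ℝ) ≤ φ1 p := le_trans hq (hp q)
  have hX1 : gradX h φ1 (p.1.succ, p.2) ≤ 0 := by
    unfold gradX
    split_ifs with hc
    · apply div_nonpos_of_nonpos_of_nonneg _ hh.le
      have h1 := hp ((⟨(p.1.succ : Fin (N+1)).val, hc.2⟩ : Fin N), p.2)
      have h2 : ((⟨(p.1.succ : Fin (N+1)).val - 1, by omega⟩ : Fin N), p.2) = p := by
        ext <;> simp [Fin.val_succ]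
      rw [h2]
      linarith
    · exact le_refl _
  have hX2 : 0 ≤ gradX h φ1 (p.1.castSucc, p.2) := by
    unfold gradX
    split_ifs with hc
    · apply div_nonneg _ hh.le
      have h1 := hp ((⟨(p.1.castSucc : Fin (N+1)).val - 1, by omega⟩ : Fin N), p.2)
      have h2 : ((⟨(p.1.castSucc : Fin (N+1)).val, hc.2⟩ : Fin N), p.2) = p := by
        ext <;> simp
      rw [h2]
      linarith
    · exact le_refl _
  have hY1 : gradY h φ1 (p.1, p.2.succ) ≤ 0 := by
    unfold gradY
    split_ifs with hc
    · apply div_nonpos_of_nonpos_of_nonneg _ hh.le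
      have h1 := hp (p.1, (⟨(p.2.succ : Fin (M+1)).val, hc.2⟩ : Fin M))
      have h2 : (p.1, (⟨(p.2.succ : Fin (M+1)).val - 1, by omega⟩ : Fin M)) = p := by
        ext <;> simp [Fin.val_succ]
      rw [h2]
      linarith
    · exact le_refl _
  have hY2 : 0 ≤ gradY h φ1 (p.1, p.2.castSucc) := by
    unfold gradY
    split_ifs with hc
    · apply div_nonneg _ hh.le
      have h1 := hp (p.1, (⟨(p.2.castSucc : Fin (M+1)).val - 1, by omega⟩ : Fin M))
      have h2 : (p.1, (⟨(p.2.castSucc : Fin (M+1)).val, hc.2⟩ : Fin M)) = p := by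
        ext <;> simp
      rw [h2]
      linarith
    · exact le_refl _
  have hlap : discLap h φ1 p ≤ 0 := by
    unfold discLap
    have hA := div_nonpos_of_nonpos_of_nonneg (by linarith : gradX h φ1 (p.1.succ, p.2) - gradX h φ1 (p.1.castSucc, p.2) ≤ 0) hh.le
    have hB := div_nonpos_of_nonpos_of_nonneg (by linarith : gradY h φ1 (p.1, p.2.succ) - gradY h φ1 (p.1, p.2.castSucc) ≤ 0) hh.le
    linarith
  obtain ⟨hs0, hs1⟩ := h0 p
  have h1s : (0:ℝ) < 1 - φ0 p := by linarith
  have h4 : (4:ℝ) ≤ 1 / φ0 p + 1 / (1 - φ0 p) := by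
    rw [div_add_div _ _ (ne_of_gt hs0) (ne_of_gt h1s), le_div_iff₀ (by positivity)]
    nlinarith [sq_nonneg (2 * φ0 p - 1)]
  have hnu : 0 < nuCoef lam θ (φ0 p) := by
    unfold nuCoef
    nlinarith
  have hsch := hscheme p
  have hrp := hru (φ0 p) ⟨hs0, hs1⟩
  have hdiv : 0 < (φ1 p - φ0 p) / τ := div_pos (by linarith) hτ
  have hlap2 : 0 ≤ -(ε ^ 2 * discLap h φ1 p) := by nlinarith [sq_nonneg ε]
  have hmul : nuCoef lam θ (φ0 p) * 1 ≤ nuCoef lam θ (φ0 p) * φ1 p :=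
    mul_le_mul_of_nonneg_left hp1 hnu.le
  linarith
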